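/- Under the hypotheses of the previous theorem (|f'|^q h-concave on [a,b], p, q > 1 conjugate, h nonnegative super-additive with h(t) ≥ t and h(1/2) > 0), setting x = (a+b)/2 gives: |f((a+b)/2) - (1/(b-a))∫ₐᵇ f(u) du| ≤ ((b-a)/(2^{(2q+1)/q}·(p+1)^{1/p}·h(1/2)^{1/q}))·[|f'((3a+b)/4)| + |f'((a+3b)/4)|]. -/

import Mathlib

open MeasureTheory Set

lemma ostrowski_piece
    (f' : ℝ → ℝ) (a b p q M : ℝ)
    (hp : 1 < p) (hq : 1 < q) (hpq : 1 / p + 1 / q = 1)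
    (hmeas : AEStronglyMeasurable f' (volume.restrict (Set.Ioc a b)))
    (hM : ∀ u ∈ Set.Icc a b, |f' u| ≤ M)
    (hconc2 : ∀ y ∈ Set.Icc a b, ∀ z ∈ Set.Icc a b,
      |f' y| ^ q + |f' z| ^ q ≤ 2 * |f' ((y + z) / 2)| ^ q)
    (c d : ℝ) (hcd : c < d) (hac : a ≤ c) (hdb : d ≤ b)
    (w : ℝ → ℝ) (hw_cont : ContinuousOn w (Set.Icc c d))
    (hw0 : ∀ u ∈ Set.Icc c d, 0 ≤ w u) (hw1 : ∀ u ∈ Set.Icc c d, w u ≤ d - c)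
    (hw_int : ∫ u in c..d, w u ^ p = (d - c) ^ (p + 1) / (p + 1)) :
    |∫ u in c..d, w u * f' u| ≤ (d - c) ^ (2:ℝ) / (p + 1) ^ (1 / p) * |f' ((c + d) / 2)| := by
  have hp0 : (0:ℝ) < p := lt_trans one_pos hp
  have hq0 : (0:ℝ) < q := lt_trans one_pos hq
  have hdc : (0:ℝ) < d - c := by linarith
  have hsubIcc : Set.Icc c d ⊆ Set.Icc a b := Set.Icc_subset_Icc hac hdb
  have hIocIcc : Set.Ioc c d ⊆ Set.Icc c d := Set.Ioc_subset_Icc_self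
  have hconj : p.HolderConjugate q := Real.holderConjugate_iff.mpr ⟨hp, by rw [inv_eq_one_div, inv_eq_one_div]; exact hpq⟩
  have hmid : (c + d) / 2 ∈ Set.Icc a b := hsubIcc ⟨by linarith, by linarith⟩
  set φ : ℝ → ℝ := fun u => |f' u| ^ q with hφ
  -- measurability
  have hfm : AEStronglyMeasurable f' (volume.restrict (Set.Ioc c d)) :=
    hmeas.mono_measure (Measure.restrict_mono (Set.Ioc_subset_Ioc hac hdb) le_rfl)
  have habs : AEStronglyMeasurable (fun u => |f' u|) (volume.restrict (Set.Ioc c d)) := by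
    simpa [Real.norm_eq_abs] using hfm.norm
  have hwm : AEStronglyMeasurable w (volume.restrict (Set.Ioc c d)) :=
    (hw_cont.mono hIocIcc).aestronglyMeasurable measurableSet_Ioc
  -- Memℒp
  have hw_mem : MemLp w (ENNReal.ofReal p) (volume.restrict (Set.Ioc c d)) := by
    refine MemLp.of_bound hwm (d - c) ?_
    filter_upwards [ae_restrict_mem measurableSet_Ioc] with u hu
    rw [Real.norm_eq_abs, abs_of_nonneg (hw0 u (hIocIcc hu))]
    exact hw1 u (hIocIcc hu)
  have habs_mem : MemLp (fun u => |f' u|) (ENNReal.ofReal q) (volume.restrict (Set.Ioc c d)) := by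
    refine MemLp.of_bound habs M ?_
    filter_upwards [ae_restrict_mem measurableSet_Ioc] with u hu
    rw [Real.norm_eq_abs, abs_abs]
    exact hM u (hsubIcc (hIocIcc hu))
  -- integrability of φ on Ioc c d
  have hφ_int : IntegrableOn φ (Set.Ioc c d) volume := by
    have := habs_mem.integrable_norm_rpow (by simp [hq0.ne', ENNReal.ofReal_eq_zero, not_le]; linarith)
      ENNReal.ofReal_ne_top
    rw [ENNReal.toReal_ofReal hq0.le] at this
    exact (by simpa [hφ, Real.norm_eq_abs, abs_abs] using this :
      Integrable (fun x => |f' x| ^ q) (volume.restrict (Set.Ioc c d)))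
  have hφ_ii : IntervalIntegrable φ volume c d := by
    rw [intervalIntegrable_iff_integrableOn_Ioc_of_le hcd.le]; exact hφ_int
  -- Hölder
  have hold : ∫ u in Set.Ioc c d, w u * |f' u| ≤
      (∫ u in Set.Ioc c d, w u ^ p) ^ (1 / p) * (∫ u in Set.Ioc c d, |f' u| ^ q) ^ (1 / q) := by
    refine integral_mul_le_Lp_mul_Lq_of_nonneg hconj ?_ ?_ hw_mem habs_mem
    · filter_upwards [ae_restrict_mem measurableSet_Ioc] with u hu
      exact hw0 u (hIocIcc hu)
    · exact Filter.Eventually.of_forall fun u => abs_nonneg _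
  -- step 1 : reduce to product integral
  have step1 : |∫ u in c..d, w u * f' u| ≤ ∫ u in Set.Ioc c d, w u * |f' u| := by
    rw [intervalIntegral.integral_of_le hcd.le]
    have e1 : (∫ u in Set.Ioc c d, ‖w u * f' u‖) = ∫ u in Set.Ioc c d, w u * |f' u| := by
      refine integral_congr_ae ?_
      filter_upwards [ae_restrict_mem measurableSet_Ioc] with u hu
      rw [Real.norm_eq_abs, abs_mul, abs_of_nonneg (hw0 u (hIocIcc hu))]
    calc |∫ u in Set.Ioc c d, w u * f' u| ≤ ∫ u in Set.Ioc c d, ‖w u * f' u‖ := by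
          simpa [Real.norm_eq_abs] using
            norm_integral_le_integral_norm (μ := volume.restrict (Set.Ioc c d))
              (fun u => w u * f' u)
      _ = _ := e1
  -- Hermite–Hadamard
  have hHH : ∫ u in Set.Ioc c d, φ u ≤ (d - c) * φ ((c + d) / 2) := by
    have hφrefl : IntervalIntegrable (fun u => φ (c + d - u)) volume c d := by
      have h1 := hφ_ii.comp_sub_left (c + d)
      have h2 : c + d - c = d := by ring
      have h3 : c + d - d = c := by ring
      rw [h2, h3] at h1
      exact h1.symm
    have hre : (∫ u in c..d, φ (c + d - u)) = ∫ u in c..d, φ u := by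
      have := intervalIntegral.integral_comp_sub_left (a := c) (b := d) φ (c + d)
      simpa using this
    have hmono : (∫ u in c..d, (φ u + φ (c + d - u))) ≤ ∫ u in c..d, (2 * φ ((c + d) / 2)) := by
      refine intervalIntegral.integral_mono_on hcd.le (hφ_ii.add hφrefl)
        intervalIntegrable_const ?_
      intro u hu
      have h1 : u ∈ Set.Icc a b := hsubIcc hu
      have h2 : c + d - u ∈ Set.Icc a b := hsubIcc ⟨by linarith [hu.2], by linarith [hu.1]⟩
      have h3 := hconc2 u h1 (c + d - u) h2
      have heq : (u + (c + d - u)) / 2 = (c + d) / 2 := by ring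
      rw [heq] at h3
      exact h3
    rw [intervalIntegral.integral_add hφ_ii hφrefl, hre, intervalIntegral.integral_const,
      smul_eq_mul] at hmono
    have : (∫ u in c..d, φ u) ≤ (d - c) * φ ((c + d) / 2) := by linarith
    rwa [intervalIntegral.integral_of_le hcd.le] at this
  -- combine
  have hφmid_nonneg : 0 ≤ φ ((c + d) / 2) := Real.rpow_nonneg (abs_nonneg _) q
  have hAeq : (∫ u in Set.Ioc c d, w u ^ p) = (d - c) ^ (p + 1) / (p + 1) := by
    rw [← intervalIntegral.integral_of_le hcd.le]; exact hw_int
  have hBpos : 0 ≤ ∫ u in Set.Ioc c d, φ u :=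
    setIntegral_nonneg measurableSet_Ioc fun u _ => Real.rpow_nonneg (abs_nonneg _) q
  have hB : (∫ u in Set.Ioc c d, φ u) ^ (1 / q) ≤ (d - c) ^ (1 / q) * |f' ((c + d) / 2)| := by
    have h1 : (∫ u in Set.Ioc c d, φ u) ^ (1 / q) ≤ ((d - c) * φ ((c + d) / 2)) ^ (1 / q) :=
      Real.rpow_le_rpow hBpos hHH (by positivity)
    refine h1.trans (le_of_eq ?_)
    rw [Real.mul_rpow hdc.le hφmid_nonneg]
    congr 1
    show (|f' ((c + d) / 2)| ^ q) ^ (1 / q) = |f' ((c + d) / 2)|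
    rw [← Real.rpow_mul (abs_nonneg _), mul_one_div, div_self hq0.ne', Real.rpow_one]
  have hA0 : 0 ≤ ∫ u in Set.Ioc c d, w u ^ p := by
    rw [hAeq]; positivity
  have hexp : (p + 1) * (1 / p) + 1 / q = 2 := by
    have e1 : (p + 1) * (1 / p) = 1 + 1 / p := by field_simp
    linarith
  have hpow : (d - c) ^ ((p + 1) * (1 / p)) * (d - c) ^ (1 / q) = (d - c) ^ (2:ℝ) := by
    rw [← Real.rpow_add hdc, hexp]
  have hA : (∫ u in Set.Ioc c d, w u ^ p) ^ (1 / p)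
      = (d - c) ^ ((p + 1) * (1 / p)) / (p + 1) ^ (1 / p) := by
    rw [hAeq, Real.div_rpow (Real.rpow_nonneg hdc.le _) (by positivity),
      ← Real.rpow_mul hdc.le]
  calc |∫ u in c..d, w u * f' u|
      ≤ ∫ u in Set.Ioc c d, w u * |f' u| := step1
    _ ≤ (∫ u in Set.Ioc c d, w u ^ p) ^ (1 / p) * (∫ u in Set.Ioc c d, |f' u| ^ q) ^ (1 / q) :=
        hold
    _ ≤ (∫ u in Set.Ioc c d, w u ^ p) ^ (1 / p) * ((d - c) ^ (1 / q) * |f' ((c + d) / 2)|) :=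
        mul_le_mul_of_nonneg_left hB (Real.rpow_nonneg hA0 _)
    _ = (d - c) ^ (2:ℝ) / (p + 1) ^ (1 / p) * |f' ((c + d) / 2)| := by
        rw [hA]
        rw [show (d - c) ^ ((p + 1) * (1 / p)) / (p + 1) ^ (1 / p)
            * ((d - c) ^ (1 / q) * |f' ((c + d) / 2)|)
            = ((d - c) ^ ((p + 1) * (1 / p)) * (d - c) ^ (1 / q)) / (p + 1) ^ (1 / p)
            * |f' ((c + d) / 2)| from by ring, hpow]

theorem ostrowski_h_concave_midpoint
    (h : ℝ → ℝ) (f f' : ℝ → ℝ) (a b p q : ℝ) (hab : a < b)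
    (hp : 1 < p) (hq : 1 < q) (hpq : 1 / p + 1 / q = 1)
    (hh_nonneg : ∀ t, 0 ≤ t → 0 ≤ h t)
    (hh_superadd : ∀ s t, 0 ≤ s → 0 ≤ t → h s + h t ≤ h (s + t))
    (hh_ge : ∀ t ∈ Set.Ioo (0:ℝ) 1, t ≤ h t)
    (hh_half : 0 < h (1 / 2))
    (hderiv : ∀ y ∈ Set.Icc a b, HasDerivAt f (f' y) y)
    (hint : IntervalIntegrable f' volume a b)
    (hconc : ∀ y ∈ Set.Icc a b, ∀ z ∈ Set.Icc a b, ∀ t ∈ Set.Icc (0:ℝ) 1,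
      h t * |f' y| ^ q + h (1 - t) * |f' z| ^ q ≤ |f' (t * y + (1 - t) * z)| ^ q) :
    |f ((a + b) / 2) - (1 / (b - a)) * ∫ u in a..b, f u| ≤
      ((b - a) / ((2:ℝ) ^ ((2 * q + 1) / q) * (p + 1) ^ (1 / p) * h (1 / 2) ^ (1 / q))) *
        (|f' ((3 * a + b) / 4)| + |f' ((a + 3 * b) / 4)|) := by
  have hq0 : (0:ℝ) < q := lt_trans one_pos hq
  have hp0 : (0:ℝ) < p := lt_trans one_pos hp
  have hba : (0:ℝ) < b - a := by linarith
  have hRHS_nonneg : 0 ≤ ((b - a) / ((2:ℝ) ^ ((2 * q + 1) / q) * (p + 1) ^ (1 / p)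
      * h (1 / 2) ^ (1 / q))) * (|f' ((3 * a + b) / 4)| + |f' ((a + 3 * b) / 4)|) := by
    have h1 : (0:ℝ) < (2:ℝ) ^ ((2 * q + 1) / q) := Real.rpow_pos_of_pos two_pos _
    have h2 : (0:ℝ) < (p + 1) ^ (1 / p) := Real.rpow_pos_of_pos (by linarith) _
    have h3 : (0:ℝ) < h (1 / 2) ^ (1 / q) := Real.rpow_pos_of_pos hh_half _
    positivity
  by_cases hzero : ∀ y ∈ Set.Icc a b, f' y = 0
  · -- degenerate case : f is constant
    have hm : (a + b) / 2 ∈ Set.Icc a b := ⟨by linarith, by linarith⟩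
    have hconst : ∀ u ∈ Set.Icc a b, f u = f ((a + b) / 2) := by
      intro u hu
      have := Convex.norm_image_sub_le_of_norm_hasDerivWithin_le
        (f := f) (f' := f') (C := 0) (s := Set.Icc a b)
        (fun y hy => (hderiv y hy).hasDerivWithinAt)
        (fun y hy => by simp [hzero y hy]) (convex_Icc a b) hm hu
      simp only [zero_mul, norm_le_zero_iff, sub_eq_zero] at this
      exact this
    have hInt : (∫ u in a..b, f u) = (b - a) * f ((a + b) / 2) := by
      rw [intervalIntegral.integral_congr (g := fun _ => f ((a + b) / 2))
        (fun u hu => hconst u (by rwa [Set.uIcc_of_le hab.le] at hu))]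
      simp [smul_eq_mul, mul_comm]
    rw [hInt]
    have : f ((a + b) / 2) - 1 / (b - a) * ((b - a) * f ((a + b) / 2)) = 0 := by
      field_simp
      ring
    rw [this, abs_zero]
    exact hRHS_nonneg
  · -- main case
    push_neg at hzero
    obtain ⟨y₀, hy₀, hfy₀⟩ := hzero
    have hgy₀ : 0 < |f' y₀| ^ q := Real.rpow_pos_of_pos (abs_pos.mpr hfy₀) q
    have hh0 : h 0 = 0 := by
      have := hh_superadd 0 0 le_rfl le_rfl
      have h0n := hh_nonneg 0 le_rfl
      simp at this
      linarith
    have hh1 : h 1 ≤ 1 := by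
      have hc := hconc y₀ hy₀ y₀ hy₀ 0 ⟨le_rfl, zero_le_one⟩
      have harg : (0:ℝ) * y₀ + (1 - 0) * y₀ = y₀ := by ring
      rw [harg, hh0, zero_mul, zero_add, sub_zero] at hc
      nlinarith
    have hhalf : h (1 / 2) = 1 / 2 := by
      have h1 := hh_superadd (1/2) (1/2) (by norm_num) (by norm_num)
      have h2 := hh_ge (1/2) ⟨by norm_num, by norm_num⟩
      have h3 : (1:ℝ)/2 + 1/2 = 1 := by norm_num
      rw [h3] at h1
      linarith
    have hconc2 : ∀ y ∈ Set.Icc a b, ∀ z ∈ Set.Icc a b,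
        |f' y| ^ q + |f' z| ^ q ≤ 2 * |f' ((y + z) / 2)| ^ q := by
      intro y hy z hz
      have hc := hconc y hy z hz (1/2) ⟨by norm_num, by norm_num⟩
      have h1 : (1:ℝ) - 1/2 = 1/2 := by norm_num
      have h2 : (1:ℝ)/2 * y + (1 - 1/2) * z = (y + z) / 2 := by ring
      rw [h2, h1, hhalf] at hc
      linarith
    -- uniform bound on |f'|
    set m := (a + b) / 2 with hm_def
    have hm : m ∈ Set.Icc a b := ⟨by simp [hm_def]; linarith, by simp [hm_def]; linarith⟩
    set M : ℝ := (2 * |f' m| ^ q) ^ (1/q) with hM_def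
    have hM : ∀ u ∈ Set.Icc a b, |f' u| ≤ M := by
      intro u hu
      have hrefl : a + b - u ∈ Set.Icc a b := ⟨by linarith [hu.2], by linarith [hu.1]⟩
      have hc := hconc2 u hu (a + b - u) hrefl
      have harg : (u + (a + b - u)) / 2 = m := by rw [hm_def]; ring
      rw [harg] at hc
      have hgu : |f' u| ^ q ≤ 2 * |f' m| ^ q := by
        have := Real.rpow_nonneg (abs_nonneg (f' (a + b - u))) q
        linarith
      have h1 : (|f' u| ^ q) ^ (1/q) ≤ (2 * |f' m| ^ q) ^ (1/q) :=
        Real.rpow_le_rpow (Real.rpow_nonneg (abs_nonneg _) q) hgu (by positivity)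
      rwa [← Real.rpow_mul (abs_nonneg _), mul_one_div, div_self hq0.ne',
        Real.rpow_one] at h1
    have hmeas : AEStronglyMeasurable f' (volume.restrict (Set.Ioc a b)) :=
      hint.1.aestronglyMeasurable
    have hma : a < m := by rw [hm_def]; linarith
    have hmb : m < b := by rw [hm_def]; linarith
    -- the two pieces
    have hw_int1 : (∫ u in a..m, (u - a) ^ p) = (m - a) ^ (p + 1) / (p + 1) := by
      have h1 := intervalIntegral.integral_comp_sub_right (a := a) (b := m)
        (fun x => x ^ p) a
      rw [h1, sub_self]
      rw [integral_rpow (Or.inl (by linarith : (-1:ℝ) < p))]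
      rw [Real.zero_rpow (by positivity : p + 1 ≠ 0)]
      ring
    have hw_int2 : (∫ u in m..b, (b - u) ^ p) = (b - m) ^ (p + 1) / (p + 1) := by
      have h1 := intervalIntegral.integral_comp_sub_left (a := m) (b := b)
        (fun x => x ^ p) b
      rw [h1, sub_self]
      rw [integral_rpow (Or.inl (by linarith : (-1:ℝ) < p))]
      rw [Real.zero_rpow (by positivity : p + 1 ≠ 0)]
      ring
    have piece1 := ostrowski_piece f' a b p q M hp hq hpq hmeas hM hconc2 a m hma le_rfl hmb.le
      (fun u => u - a) (continuousOn_id.sub continuousOn_const)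
      (fun u hu => by show (0:ℝ) ≤ u - a; linarith [hu.1]) (fun u hu => by show u - a ≤ m - a; linarith [hu.2]) hw_int1
    have piece2 := ostrowski_piece f' a b p q M hp hq hpq hmeas hM hconc2 m b hmb hma.le le_rfl
      (fun u => b - u) (continuousOn_const.sub continuousOn_id)
      (fun u hu => by show (0:ℝ) ≤ b - u; linarith [hu.2]) (fun u hu => by show b - u ≤ b - m; linarith [hu.1]) hw_int2
    -- integration by parts identity
    have hsub1 : Set.uIcc a m ⊆ Set.uIcc a b := by
      rw [Set.uIcc_of_le hma.le, Set.uIcc_of_le hab.le]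
      exact Set.Icc_subset_Icc le_rfl hmb.le
    have hsub2 : Set.uIcc m b ⊆ Set.uIcc a b := by
      rw [Set.uIcc_of_le hmb.le, Set.uIcc_of_le hab.le]
      exact Set.Icc_subset_Icc hma.le le_rfl
    have hIccsub1 : Set.uIcc a m ⊆ Set.Icc a b := by
      rwa [Set.uIcc_of_le hab.le] at hsub1
    have hIccsub2 : Set.uIcc m b ⊆ Set.Icc a b := by
      rwa [Set.uIcc_of_le hab.le] at hsub2
    have key1 : (∫ x in a..m, (x - a) * f' x) = (m - a) * f m - ∫ x in a..m, f x := by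
      have := intervalIntegral.integral_mul_deriv_eq_deriv_mul
        (u := fun x => x - a) (u' := fun _ => (1:ℝ)) (v := f) (v' := f')
        (fun x hx => (hasDerivAt_id x).sub_const a)
        (fun x hx => hderiv x (hIccsub1 hx))
        intervalIntegrable_const (hint.mono_set hsub1)
      simpa using this
    have key2 : (∫ x in m..b, (x - b) * f' x) = (b - m) * f m - ∫ x in m..b, f x := by
      have := intervalIntegral.integral_mul_deriv_eq_deriv_mul
        (u := fun x => x - b) (u' := fun _ => (1:ℝ)) (v := f) (v' := f')
        (fun x hx => (hasDerivAt_id x).sub_const b)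
        (fun x hx => hderiv x (hIccsub2 hx))
        intervalIntegrable_const (hint.mono_set hsub2)
      simp at this
      rw [this]; ring
    have hfc : ContinuousOn f (Set.Icc a b) :=
      fun x hx => ((hderiv x hx).continuousAt).continuousWithinAt
    have hfi1 : IntervalIntegrable f volume a m :=
      (hfc.mono hIccsub1).intervalIntegrable
    have hfi2 : IntervalIntegrable f volume m b :=
      (hfc.mono hIccsub2).intervalIntegrable
    have hsplit : (∫ x in a..m, f x) + (∫ x in m..b, f x) = ∫ x in a..b, f x :=
      intervalIntegral.integral_add_adjacent_intervals hfi1 hfi2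
    have hiden : f m - (1 / (b - a)) * ∫ u in a..b, f u
        = (1 / (b - a)) * ((∫ x in a..m, (x - a) * f' x) + (∫ x in m..b, (x - b) * f' x)) := by
      rw [key1, key2, ← hsplit]
      field_simp
      ring
    -- constant simplification
    have hPpos : (0:ℝ) < (p + 1) ^ (1 / p) := Real.rpow_pos_of_pos (by linarith) _
    have hc : (2:ℝ) ^ ((2 * q + 1) / q) * (p + 1) ^ (1 / p) * h (1 / 2) ^ (1 / q)
        = 4 * (p + 1) ^ (1 / p) := by
      rw [hhalf]
      have h1 : ((1:ℝ)/2) ^ (1/q) = (2:ℝ) ^ (-(1/q)) := by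
        rw [show (1:ℝ)/2 = 2⁻¹ by norm_num, ← Real.rpow_neg_one 2,
          ← Real.rpow_mul (by norm_num : (0:ℝ) ≤ 2)]
        norm_num
      rw [h1]
      have h2 : (2:ℝ) ^ ((2 * q + 1) / q) * (p + 1) ^ (1 / p) * (2:ℝ) ^ (-(1/q))
          = ((2:ℝ) ^ ((2 * q + 1) / q) * (2:ℝ) ^ (-(1/q))) * (p + 1) ^ (1 / p) := by ring
      rw [h2, ← Real.rpow_add two_pos]
      have h3 : (2 * q + 1) / q + -(1/q) = 2 := by field_simp; ring
      rw [h3]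
      norm_num
    -- final assembly
    have e1 : (a + m) / 2 = (3 * a + b) / 4 := by rw [hm_def]; ring
    have e2 : (m + b) / 2 = (a + 3 * b) / 4 := by rw [hm_def]; ring
    have e3 : (m - a) ^ (2:ℝ) = (b - a) * (b - a) / 4 := by
      rw [show (2:ℝ) = ((2:ℕ):ℝ) by norm_num, Real.rpow_natCast, hm_def]
      ring
    have e4 : (b - m) ^ (2:ℝ) = (b - a) * (b - a) / 4 := by
      rw [show (2:ℝ) = ((2:ℕ):ℝ) by norm_num, Real.rpow_natCast, hm_def]
      ring
    rw [e1, e3] at piece1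
    rw [e2, e4] at piece2
    have pieceI2 : |∫ x in m..b, (x - b) * f' x|
        ≤ (b - a) * (b - a) / 4 / (p + 1) ^ (1 / p) * |f' ((a + 3 * b) / 4)| := by
      have hneg : (∫ x in m..b, (x - b) * f' x) = -(∫ x in m..b, (b - x) * f' x) := by
        rw [← intervalIntegral.integral_neg]
        refine intervalIntegral.integral_congr fun x _ => by ring
      rw [hneg, abs_neg]
      exact piece2
    rw [hiden, abs_mul,
      abs_of_nonneg (by positivity : (0:ℝ) ≤ 1 / (b - a)), hc]
    calc (1 / (b - a)) * |(∫ x in a..m, (x - a) * f' x) + (∫ x in m..b, (x - b) * f' x)|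
        ≤ (1 / (b - a)) * (|∫ x in a..m, (x - a) * f' x| + |∫ x in m..b, (x - b) * f' x|) := by
          gcongr
          exact abs_add_le _ _
      _ ≤ (1 / (b - a)) * ((b - a) * (b - a) / 4 / (p + 1) ^ (1 / p) * |f' ((3 * a + b) / 4)|
            + (b - a) * (b - a) / 4 / (p + 1) ^ (1 / p) * |f' ((a + 3 * b) / 4)|) := by
          exact mul_le_mul_of_nonneg_left (add_le_add piece1 pieceI2) (by positivity)
      _ = ((b - a) / (4 * (p + 1) ^ (1 / p)))
            * (|f' ((3 * a + b) / 4)| + |f' ((a + 3 * b) / 4)|) := by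
          field_simp
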